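/- Let C be a commutative ring, λ ∈ C, and let a, b : ℕ → C be sequences in C. Then for every n ∈ ℕ, ∑_{k=0}^{n} λ^k ∑_{i=0}^{n} binom(n, i)·binom(i, k)·a(n+k−i)·b(i) = ∑_{k=0}^{n} λ^k ∑_{i=0}^{n} binom(n, i)·binom(i, k)·a(i)·b(n+k−i). Consequently, a sequence {p_n(x)} of power series is of λ-binomial type if and only if the symmetric identity p_n(x+y) = ∑_{k=0}^{n} λ^k ∑_{i=0}^{n} binom(n,i)·binom(i,k)·p_i(x)·p_{n+k−i}(y) holds. -/

import Mathlib

open Finset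

lemma lam_inner_symm {C : Type*} [CommRing C] (a b : ℕ → C) (n k : ℕ) :
    ∑ i ∈ Finset.range (n + 1), (n.choose i : C) * (i.choose k : C) * a (n + k - i) * b i
    = ∑ i ∈ Finset.range (n + 1), (n.choose i : C) * (i.choose k : C) * a i * b (n + k - i) := by
  simp only [mul_assoc]
  rcases le_or_gt k n with hk | hk
  · have hsub : Finset.Icc k n ⊆ Finset.range (n + 1) := by
      intro x hx; simp only [Finset.mem_Icc, Finset.mem_range] at *; omega
    have h1 : ∀ (f : ℕ → C), (∑ i ∈ Finset.range (n + 1),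
        (n.choose i : C) * ((i.choose k : C) * f i)) =
        ∑ i ∈ Finset.Icc k n, (n.choose i : C) * ((i.choose k : C) * f i) := by
      intro f
      refine (Finset.sum_subset hsub ?_).symm
      intro x hx hx'
      simp only [Finset.mem_range, Finset.mem_Icc] at hx hx'
      rw [Nat.choose_eq_zero_of_lt (show x < k by omega)]
      simp
    rw [h1 (fun i => a (n + k - i) * b i), h1 (fun i => a i * b (n + k - i))]
    refine Finset.sum_nbij' (fun i => n + k - i) (fun i => n + k - i) ?_ ?_ ?_ ?_ ?_
    · intro i hi; simp only [Finset.mem_Icc] at *; omega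
    · intro i hi; simp only [Finset.mem_Icc] at *; omega
    · intro i hi; simp only [Finset.mem_Icc] at hi; show n + k - (n + k - i) = i; omega
    · intro i hi; simp only [Finset.mem_Icc] at hi; show n + k - (n + k - i) = i; omega
    · intro i hi
      simp only [Finset.mem_Icc] at hi
      have hj : n + k - (n + k - i) = i := by omega
      rw [hj]
      have hc : n.choose i * i.choose k = n.choose (n + k - i) * (n + k - i).choose k := by
        rw [Nat.choose_mul (hsk := by omega), Nat.choose_mul (hsk := by omega)]
        congr 1
        rw [show n + k - i - k = n - i by omega]
        rw [← Nat.choose_symm (show i - k ≤ n - k by omega)]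
        congr 1; omega
      have hcC : (n.choose i : C) * (i.choose k : C)
          = (n.choose (n + k - i) : C) * ((n + k - i).choose k : C) := by
        exact_mod_cast congrArg (Nat.cast : ℕ → C) hc
      calc (n.choose i : C) * ((i.choose k : C) * (a (n + k - i) * b i))
          = ((n.choose i : C) * (i.choose k : C)) * (a (n + k - i) * b i) := by ring
        _ = ((n.choose (n + k - i) : C) * ((n + k - i).choose k : C)) * (a (n + k - i) * b i) := by rw [hcC]
        _ = (n.choose (n + k - i) : C) * (((n + k - i).choose k : C) * (a (n + k - i) * b i)) := by ring
  · have h0 : ∀ (f : ℕ → C), (∑ i ∈ Finset.range (n + 1),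
        (n.choose i : C) * ((i.choose k : C) * f i)) = 0 := by
      intro f
      apply Finset.sum_eq_zero
      intro i hi
      simp only [Finset.mem_range] at hi
      rw [Nat.choose_eq_zero_of_lt (show i < k by omega)]
      simp
    rw [h0 (fun i => a (n + k - i) * b i), h0 (fun i => a i * b (n + k - i))]

theorem lambda_binomial_symm {C : Type*} [CommRing C] (lam : C) (a b : ℕ → C) :
    (∀ n : ℕ,
      ∑ k ∈ Finset.range (n + 1), lam ^ k *
        ∑ i ∈ Finset.range (n + 1), (n.choose i : C) * (i.choose k : C) * a (n + k - i) * b i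
      = ∑ k ∈ Finset.range (n + 1), lam ^ k *
        ∑ i ∈ Finset.range (n + 1), (n.choose i : C) * (i.choose k : C) * a i * b (n + k - i))
    ∧
    (∀ p : ℕ → C,
      (∀ n : ℕ, p n =
        ∑ k ∈ Finset.range (n + 1), lam ^ k *
          ∑ i ∈ Finset.range (n + 1), (n.choose i : C) * (i.choose k : C) * a (n + k - i) * b i)
      ↔
      (∀ n : ℕ, p n =
        ∑ k ∈ Finset.range (n + 1), lam ^ k *
          ∑ i ∈ Finset.range (n + 1), (n.choose i : C) * (i.choose k : C) * a i * b (n + k - i))) := by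
  have key : ∀ n : ℕ,
      ∑ k ∈ Finset.range (n + 1), lam ^ k *
        ∑ i ∈ Finset.range (n + 1), (n.choose i : C) * (i.choose k : C) * a (n + k - i) * b i
      = ∑ k ∈ Finset.range (n + 1), lam ^ k *
        ∑ i ∈ Finset.range (n + 1), (n.choose i : C) * (i.choose k : C) * a i * b (n + k - i) := by
    intro n
    apply Finset.sum_congr rfl
    intro k _
    rw [lam_inner_symm]
  exact ⟨key, fun p => by constructor <;> intro h n <;> rw [h n] <;> [exact key n; exact (key n).symm]⟩
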